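/- Let H, G, ε > 0 and let f_1, …, f_m : ℝ^n → ℝ be differentiable functions that are H-strongly convex, with ‖∇f_j(x)‖_2 ≤ G for all x ∈ S_n and all j. Consider the projected online gradient descent dynamics on the simplex: x_1 ∈ S_n arbitrary; at step t, if f_j(x_t) ≤ ε for all j ∈ [m] the algorithm halts with output x_t; otherwise some index j_t with f_{j_t}(x_t) > ε is chosen, and x_{t+1} is set to the Euclidean projection onto S_n of y_{t+1} = x_t − (1/(H t)) ∇f_{j_t}(x_t). If the program is feasible, i.e., there exists x* ∈ S_n with f_j(x*) ≤ 0 for all j, then for every T ≥ 1 with (G²/(2H))(1 + log T) < εT, the algorithm halts at some step t ≤ T; consequently it returns an ε-approximate solution within O((G²/(Hε)) log(G²/(Hε))) iterations. -/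

import Mathlib

open Filter Set
open scoped RealInnerProductSpace Topology

/-- First-order condition for a convex differentiable function. -/
lemma convex_fderiv_le {E : Type*} [NormedAddCommGroup E] [NormedSpace ℝ E]
    {φ : E → ℝ} {φ' : E →L[ℝ] ℝ} {x : E}
    (hconv : ConvexOn ℝ Set.univ φ) (hd : HasFDerivAt φ φ' x) (y : E) :
    φ x + φ' (y - x) ≤ φ y := by
  have hline : HasDerivAt (fun s : ℝ => x + s • (y - x)) (y - x) 0 := by
    simpa using ((hasDerivAt_id (0 : ℝ)).smul_const (y - x)).const_add x
  have hd' : HasFDerivAt φ φ' (x + (0 : ℝ) • (y - x)) := by simpa using hd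
  have hψ : HasDerivAt (fun s : ℝ => φ (x + s • (y - x))) (φ' (y - x)) 0 :=
    hd'.comp_hasDerivAt 0 hline
  rw [hasDerivAt_iff_tendsto_slope] at hψ
  have htend : Tendsto (slope (fun s : ℝ => φ (x + s • (y - x))) 0) (𝓝[>] 0)
      (𝓝 (φ' (y - x))) :=
    hψ.mono_left (nhdsWithin_mono 0 fun s hs => ne_of_gt hs)
  have hbound : ∀ᶠ s in 𝓝[>] (0 : ℝ),
      slope (fun s : ℝ => φ (x + s • (y - x))) 0 s ≤ φ y - φ x := by
    filter_upwards [Ioc_mem_nhdsGT_of_mem (by norm_num : (0:ℝ) ∈ Set.Ico (0:ℝ) 1)]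
      with s hs
    obtain ⟨hs0, hs1⟩ := hs
    have hc := hconv.2 (Set.mem_univ x) (Set.mem_univ y)
      (by linarith : (0:ℝ) ≤ 1 - s) (le_of_lt hs0) (by ring)
    have hxy : (1 - s) • x + s • y = x + s • (y - x) := by module
    rw [hxy] at hc
    rw [slope_def_field]
    simp only [sub_zero, zero_smul, add_zero]
    rw [div_le_iff₀ hs0]
    simp only [smul_eq_mul] at hc
    nlinarith
  have := le_of_tendsto htend hbound
  linarith

/-- Strong convexity first-order inequality. -/
lemma strong_grad {E : Type*} [NormedAddCommGroup E] [InnerProductSpace ℝ E]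
    [CompleteSpace E] {f : E → ℝ} {H : ℝ}
    (hconv : ConvexOn ℝ Set.univ (fun z => f z - (H / 2) * ‖z‖ ^ 2))
    {gx x : E} (hg : HasGradientAt f gx x) (y : E) :
    f x + ⟪gx, y - x⟫ + (H / 2) * ‖y - x‖ ^ 2 ≤ f y := by
  have hgf : HasFDerivAt f (InnerProductSpace.toDual ℝ E gx) x :=
    hasGradientAt_iff_hasFDerivAt.mp hg
  have hinner : HasFDerivAt (fun t : E => ⟪t, t⟫)
      ((fderivInnerCLM ℝ (x, x)).comp ((ContinuousLinearMap.id ℝ E).prod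
        (ContinuousLinearMap.id ℝ E))) x :=
    (hasFDerivAt_id x).inner ℝ (hasFDerivAt_id x)
  have hsq : HasFDerivAt (fun z : E => (H / 2) * ‖z‖ ^ 2)
      ((H / 2) • ((fderivInnerCLM ℝ (x, x)).comp ((ContinuousLinearMap.id ℝ E).prod
        (ContinuousLinearMap.id ℝ E)))) x := by
    have := hinner.const_mul (H / 2)
    simpa only [real_inner_self_eq_norm_sq] using this
  have hφd := hgf.sub hsq
  have hmain := convex_fderiv_le hconv hφd y
  simp only [ContinuousLinearMap.sub_apply, ContinuousLinearMap.smul_apply,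
    ContinuousLinearMap.comp_apply, ContinuousLinearMap.prod_apply,
    ContinuousLinearMap.id_apply, fderivInnerCLM_apply,
    InnerProductSpace.toDual_apply_apply, smul_eq_mul] at hmain
  have e1 : ‖y - x‖ ^ 2 = ⟪y, y⟫ - 2 * ⟪x, y⟫ + ⟪x, x⟫ := by
    rw [norm_sub_sq_real, real_inner_self_eq_norm_sq, real_inner_self_eq_norm_sq,
      real_inner_comm]
  have e2 : ⟪x, y - x⟫ = ⟪x, y⟫ - ⟪x, x⟫ := inner_sub_right x y x
  have e3 : ⟪y - x, x⟫ = ⟪x, y⟫ - ⟪x, x⟫ := by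
    rw [real_inner_comm]; exact e2
  rw [e2, e3] at hmain
  rw [e1]
  have h2 : (H / 2) * ‖y‖ ^ 2 = (H / 2) * ⟪y, y⟫ := by
    rw [real_inner_self_eq_norm_sq]
  have h3 : (H / 2) * ‖x‖ ^ 2 = (H / 2) * ⟪x, x⟫ := by
    rw [real_inner_self_eq_norm_sq]
  nlinarith [hmain]

/-- The projection (characterized variationally) is closer to points of the set. -/
lemma proj_closer {E : Type*} [NormedAddCommGroup E] [InnerProductSpace ℝ E]
    {K : Set E} (hK : Convex ℝ K) {y p z : E} (hp : p ∈ K) (hz : z ∈ K)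
    (hmin : ∀ w ∈ K, ‖y - p‖ ≤ ‖y - w‖) : ‖p - z‖ ≤ ‖y - z‖ := by
  haveI : Nonempty K := ⟨⟨p, hp⟩⟩
  have hinf : ‖y - p‖ = ⨅ w : K, ‖y - w‖ := by
    refine le_antisymm (le_ciInf fun w => hmin w w.2) ?_
    have hbdd : BddBelow (Set.range fun w : K => ‖y - (w : E)‖) := by
      refine ⟨0, ?_⟩
      rintro r ⟨w, rfl⟩
      exact norm_nonneg _
    exact ciInf_le hbdd ⟨p, hp⟩
  have hang := (norm_eq_iInf_iff_real_inner_le_zero hK hp).mp hinf z hz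
  have hexp : ‖y - z‖ ^ 2 = ‖y - p‖ ^ 2 - 2 * ⟪y - p, z - p⟫ + ‖z - p‖ ^ 2 := by
    have h : y - z = (y - p) - (z - p) := by abel
    rw [h, norm_sub_sq_real]
  rw [norm_sub_rev]
  nlinarith [norm_nonneg (y - p), norm_nonneg (z - p), norm_nonneg (y - z), sq_nonneg (‖y - z‖ - ‖z - p‖)]

/-- Harmonic sum bound. -/
lemma harmonic_le_log : ∀ T : ℕ, 1 ≤ T →
    ∑ s ∈ Finset.range T, (1 : ℝ) / ((s : ℝ) + 1) ≤ 1 + Real.log T := by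
  intro T
  induction T with
  | zero => omega
  | succ T ih =>
    intro _
    rcases Nat.eq_zero_or_pos T with h0 | hpos
    · subst h0; norm_num
    · have ihT := ih hpos
      have hTpos : (0 : ℝ) < T := by exact_mod_cast hpos
      have hlog : (1 : ℝ) / ((T : ℝ) + 1) ≤ Real.log ((T : ℝ) + 1) - Real.log T := by
        have h := Real.log_le_sub_one_of_pos
          (show (0 : ℝ) < (T : ℝ) / ((T : ℝ) + 1) by positivity)
        rw [Real.log_div (ne_of_gt hTpos) (by positivity)] at h
        have heq : (T : ℝ) / ((T : ℝ) + 1) - 1 = -(1 / ((T : ℝ) + 1)) := by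
          field_simp
          ring
        rw [heq] at h
        linarith
      rw [Finset.sum_range_succ]
      push_cast
      linarith



/-- Main Theorem 1 (strictly convex programs via online gradient descent):
`f₁,…,f_m` are `H`-strongly convex with gradients bounded by `G` on the simplex.
The projected online gradient descent dynamics (0-indexed: step `t` uses learning
rate `1/(H(t+1))`) either halt at some step with an `ε`-approximate solution, or
perform a projected gradient step on a constraint violated by more than `ε`.
If the program is feasible, then for every `T ≥ 1` with
`(G²/(2H))(1 + log T) < εT`, the algorithm halts at some step `t < T`
(i.e. within the first `T` iterations), returning an `ε`-approximate solution. -/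
theorem strictly_convex_opt {n m : ℕ} (H G ε : ℝ)
    (hH : 0 < H) (hG : 0 < G) (hε : 0 < ε)
    (S : Set (EuclideanSpace ℝ (Fin n)))
    (hS : S = {x : EuclideanSpace ℝ (Fin n) | (∀ i, 0 ≤ x i) ∧ (∑ i, x i) = 1})
    (f : Fin m → EuclideanSpace ℝ (Fin n) → ℝ)
    (g : Fin m → EuclideanSpace ℝ (Fin n) → EuclideanSpace ℝ (Fin n))
    (hgrad : ∀ j x, HasGradientAt (f j) (g j x) x)
    (hsc : ∀ j, ConvexOn ℝ Set.univ (fun x => f j x - (H / 2) * ‖x‖ ^ 2))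
    (hgb : ∀ j, ∀ x ∈ S, ‖g j x‖ ≤ G)
    (x : ℕ → EuclideanSpace ℝ (Fin n)) (hx0 : x 0 ∈ S)
    (jsel : ℕ → Fin m)
    (hjsel : ∀ t, (∃ j, ε < f j (x t)) → ε < f (jsel t) (x t))
    (hstep : ∀ t, (∃ j, ε < f j (x t)) →
      x (t + 1) ∈ S ∧
      ∀ z ∈ S, ‖x t - (1 / (H * (t + 1 : ℝ))) • g (jsel t) (x t) - x (t + 1)‖ ≤
        ‖x t - (1 / (H * (t + 1 : ℝ))) • g (jsel t) (x t) - z‖)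
    (hfeas : ∃ xstar ∈ S, ∀ j, f j xstar ≤ 0) :
    ∀ T : ℕ, 1 ≤ T → G ^ 2 / (2 * H) * (1 + Real.log T) < ε * T →
      ∃ t, t < T ∧ ∀ j, f j (x t) ≤ ε := by
  intro T hT hlog
  by_contra hcon
  push_neg at hcon
  obtain ⟨xs, hxs, hxsf⟩ := hfeas
  -- S is convex
  have hSconv : Convex ℝ S := by
    rw [hS]
    intro a ha b hb p q hp hq hpq
    simp only [Set.mem_setOf_eq] at ha hb ⊢
    constructor
    · intro i
      simp only [PiLp.add_apply, PiLp.smul_apply, smul_eq_mul]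
      exact add_nonneg (mul_nonneg hp (ha.1 i)) (mul_nonneg hq (hb.1 i))
    · simp only [PiLp.add_apply, PiLp.smul_apply, smul_eq_mul,
        Finset.sum_add_distrib, ← Finset.mul_sum, ha.2, hb.2, mul_one]
      exact hpq
  -- violation at every step before T
  have hviol : ∀ t, t < T → ∃ j, ε < f j (x t) := fun t ht => hcon t ht
  -- membership
  have hmem : ∀ t, t ≤ T → x t ∈ S := by
    intro t
    induction t with
    | zero => exact fun _ => hx0
    | succ t ih => exact fun h => (hstep t (hviol t (by omega))).1
  -- per-step key inequality
  have key : ∀ t, t < T →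
      H * ((t : ℝ) + 1) / 2 * ‖x (t + 1) - xs‖ ^ 2 + ε ≤
        H * (t : ℝ) / 2 * ‖x t - xs‖ ^ 2 + G ^ 2 / (2 * H) * (1 / ((t : ℝ) + 1)) := by
    intro t ht
    have ht1 : (0 : ℝ) < (t : ℝ) + 1 := by positivity
    set c : ℝ := H * ((t : ℝ) + 1) with hc_def
    have hc : 0 < c := by positivity
    set η : ℝ := 1 / c with hη_def
    have hηpos : 0 < η := by positivity
    set j := jsel t
    set xt := x t
    set gt := g j xt
    have hmemt : xt ∈ S := hmem t (le_of_lt ht)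
    have hfv : ε < f j xt := hjsel t (hviol t ht)
    obtain ⟨hmem1, hproj⟩ := hstep t (hviol t ht)
    have hGb : ‖gt‖ ≤ G := hgb j xt hmemt
    -- strong convexity
    have hsg := strong_grad (hsc j) (hgrad j xt) xs
    have hIneq : ε + H / 2 * ‖xt - xs‖ ^ 2 ≤ ⟪gt, xt - xs⟫ := by
      have hIneg : ⟪gt, xs - xt⟫ = -⟪gt, xt - xs⟫ := by
        rw [show xs - xt = -(xt - xs) by abel, inner_neg_right]
      have hns : ‖xs - xt‖ = ‖xt - xs‖ := norm_sub_rev _ _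
      rw [hIneg, hns] at hsg
      have := hxsf j
      linarith
    -- projection step
    have hpd : ‖x (t + 1) - xs‖ ≤ ‖(xt - η • gt) - xs‖ :=
      proj_closer hSconv hmem1 hxs (fun w hw => hproj w hw)
    -- expansion
    have hexp : ‖(xt - η • gt) - xs‖ ^ 2 =
        ‖xt - xs‖ ^ 2 - 2 * η * ⟪gt, xt - xs⟫ + η ^ 2 * ‖gt‖ ^ 2 := by
      have h : (xt - η • gt) - xs = (xt - xs) - η • gt := by abel
      rw [h, norm_sub_sq_real, real_inner_smul_right, norm_smul,
        real_inner_comm, Real.norm_eq_abs, abs_of_pos hηpos, mul_pow]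
      ring
    have hsq : ‖x (t + 1) - xs‖ ^ 2 ≤
        ‖xt - xs‖ ^ 2 - 2 * η * ⟪gt, xt - xs⟫ + η ^ 2 * G ^ 2 := by
      have h1 : ‖x (t + 1) - xs‖ ^ 2 ≤ ‖(xt - η • gt) - xs‖ ^ 2 :=
        pow_le_pow_left₀ (norm_nonneg _) hpd 2
      have h2 : ‖gt‖ ^ 2 ≤ G ^ 2 := pow_le_pow_left₀ (norm_nonneg _) hGb 2
      have h3 : η ^ 2 * ‖gt‖ ^ 2 ≤ η ^ 2 * G ^ 2 :=
        mul_le_mul_of_nonneg_left h2 (sq_nonneg η)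
      rw [hexp] at h1
      linarith
    -- multiply by c/2
    have h3 : c / 2 * ‖x (t + 1) - xs‖ ^ 2 ≤
        c / 2 * ‖xt - xs‖ ^ 2 - ⟪gt, xt - xs⟫ + G ^ 2 / (2 * c) := by
      have hmul := mul_le_mul_of_nonneg_left hsq (by positivity : (0:ℝ) ≤ c / 2)
      have heq : c / 2 * (‖xt - xs‖ ^ 2 - 2 * η * ⟪gt, xt - xs⟫ + η ^ 2 * G ^ 2) =
          c / 2 * ‖xt - xs‖ ^ 2 - ⟪gt, xt - xs⟫ + G ^ 2 / (2 * c) := by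
        rw [hη_def]
        field_simp
      rw [heq] at hmul
      exact hmul
    have hcD : c / 2 * ‖xt - xs‖ ^ 2 =
        H * (t : ℝ) / 2 * ‖xt - xs‖ ^ 2 + H / 2 * ‖xt - xs‖ ^ 2 := by
      rw [hc_def]; ring
    have hG2c : G ^ 2 / (2 * c) = G ^ 2 / (2 * H) * (1 / ((t : ℝ) + 1)) := by
      rw [hc_def]
      field_simp
    have : H * ((t : ℝ) + 1) / 2 = c / 2 := by rw [hc_def]
    rw [this]
    linarith
  -- summation
  have hsum : ∀ t, t ≤ T →
      H * (t : ℝ) / 2 * ‖x t - xs‖ ^ 2 + ε * t ≤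
        G ^ 2 / (2 * H) * ∑ s ∈ Finset.range t, (1 : ℝ) / ((s : ℝ) + 1) := by
    intro t
    induction t with
    | zero => simp
    | succ t ih =>
      intro h
      have iht := ih (by omega)
      have hk := key t (by omega)
      rw [Finset.sum_range_succ, mul_add]
      push_cast
      push_cast at iht hk
      linarith
  have hfin := hsum T le_rfl
  have hharm := harmonic_le_log T hT
  have hmul := mul_le_mul_of_nonneg_left hharm
    (by positivity : (0:ℝ) ≤ G ^ 2 / (2 * H))
  have hDn : 0 ≤ H * (T : ℝ) / 2 * ‖x T - xs‖ ^ 2 := by positivity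
  linarith
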